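/- Let P ∈ ℚ[t]. Then P preserves formal sums of signs if and only if the following three conditions hold: P takes integer values on all integers, ΔP preserves formal sums of signs, and ½Δ₂P preserves formal sums of signs. -/

import Mathlib

open Polynomial

/-- A polynomial `P ∈ ℚ[t]` preserves formal sums of signs if for every `s ≥ 0` there is
a polynomial `Q` with integer coefficients in `s` variables such that
`P(X_1 + ⋯ + X_s) − Q` lies in the ideal generated by the `X_i^3 − X_i`. -/
def PreservesSumsOfSigns (P : Polynomial ℚ) : Prop :=
  ∀ s : ℕ, ∃ Q : MvPolynomial (Fin s) ℤ,
    Polynomial.aeval (∑ i : Fin s, MvPolynomial.X i) P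
        - MvPolynomial.map (Int.castRingHom ℚ) Q ∈
      Ideal.span (Set.range fun i : Fin s => MvPolynomial.X i ^ 3 - MvPolynomial.X i)

/-- The difference operator `ΔP(t) = P(t+1) − P(t)`. -/
noncomputable def deltaOp (P : Polynomial ℚ) : Polynomial ℚ :=
  P.comp (Polynomial.X + 1) - P

/-- The symmetric difference operator `Δ₂P(t) = P(t+1) − P(t−1)`. -/
noncomputable def delta2Op (P : Polynomial ℚ) : Polynomial ℚ :=
  P.comp (Polynomial.X + 1) - P.comp (Polynomial.X - 1)


noncomputable def Bpoly (P : Polynomial ℚ) : Polynomial ℚ := (1 / 2 : ℚ) • delta2Op P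
noncomputable def Cpoly (P : Polynomial ℚ) : Polynomial ℚ := deltaOp P - Bpoly P

private lemma span_push {R S : Type*} [CommRing R] [CommRing S] (f : R →+* S)
    (A : Set R) (B : Set S) (h : ∀ a ∈ A, f a ∈ Ideal.span B) {p : R}
    (hp : p ∈ Ideal.span A) : f p ∈ Ideal.span B := by
  have : Ideal.span A ≤ Ideal.comap f (Ideal.span B) := Ideal.span_le.mpr h
  exact this hp

private lemma key_dvd (P : Polynomial ℚ) :
    (X ^ 3 - X : Polynomial (Polynomial ℚ)) ∣
      (Polynomial.aeval (C Polynomial.X + X : Polynomial (Polynomial ℚ)) P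
        - (C P + C (Bpoly P) * X + C (Cpoly P) * X ^ 2)) := by
  set F : Polynomial (Polynomial ℚ) :=
    Polynomial.aeval (C Polynomial.X + X : Polynomial (Polynomial ℚ)) P
      - (C P + C (Bpoly P) * X + C (Cpoly P) * X ^ 2) with hF
  have hhalf : (Polynomial.C (1/2 : ℚ) : Polynomial ℚ) * 2 = 1 := by
    rw [show (2 : Polynomial ℚ) = Polynomial.C 2 from (map_ofNat _ 2).symm, ← map_mul]
    norm_num
  have heval : ∀ c : Polynomial ℚ,
      F.eval c = Polynomial.aeval (Polynomial.X + c) P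
        - (P + Bpoly P * c + Cpoly P * c ^ 2) := by
    intro c
    have h1 : F.eval c = ((Polynomial.aeval c).restrictScalars ℚ) F := by
      rw [← Polynomial.coe_aeval_eq_eval]; rfl
    rw [h1, hF]
    simp only [map_sub, map_add, map_mul, map_pow]
    have h2 : ((Polynomial.aeval c).restrictScalars ℚ)
        (Polynomial.aeval (C Polynomial.X + X : Polynomial (Polynomial ℚ)) P)
        = Polynomial.aeval (Polynomial.X + c) P := by
      rw [← Polynomial.aeval_algHom_apply]
      congr 1
      simp
    rw [h2]
    simp [Polynomial.aeval_C]
  have hF0 : F.eval 0 = 0 := by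
    rw [heval 0]; simp
  have hF1 : F.eval 1 = 0 := by
    rw [heval 1]
    simp only [Cpoly, deltaOp, Polynomial.comp_eq_aeval]
    ring
  have hFm1 : F.eval (-1) = 0 := by
    rw [heval (-1)]
    have hx : (Polynomial.X + (-1) : Polynomial ℚ) = Polynomial.X - 1 := by ring
    rw [hx]
    simp only [Cpoly, Bpoly, deltaOp, delta2Op, Polynomial.comp_eq_aeval,
      Polynomial.smul_eq_C_mul]
    linear_combination (Polynomial.aeval (Polynomial.X + 1 : Polynomial ℚ) P
      - Polynomial.aeval (Polynomial.X - 1 : Polynomial ℚ) P) * hhalf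
  obtain ⟨G1, hG1⟩ := (Polynomial.dvd_iff_isRoot).mpr hF0
  have e1 : G1.eval 1 = 0 := by
    have := hF1
    rw [hG1] at this
    simpa using this
  obtain ⟨G2, hG2⟩ := (Polynomial.dvd_iff_isRoot).mpr e1
  have e2 : G2.eval (-1) = 0 := by
    have := hFm1
    rw [hG1, hG2] at this
    simp at this
    rcases this with h | h
    · exact absurd h (by norm_num)
    · exact h
  obtain ⟨G3, hG3⟩ := (Polynomial.dvd_iff_isRoot).mpr e2
  refine ⟨G3, ?_⟩
  rw [hG1, hG2, hG3]
  simp only [map_zero, map_one, map_neg, sub_zero, sub_neg_eq_add]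
  ring

private lemma key_mem (P : Polynomial ℚ) (n : ℕ) (T : MvPolynomial (Fin n) ℚ) (j : Fin n) :
    Polynomial.aeval (T + MvPolynomial.X j) P
        - (Polynomial.aeval T P + Polynomial.aeval T (Bpoly P) * MvPolynomial.X j
            + Polynomial.aeval T (Cpoly P) * MvPolynomial.X j ^ 2) ∈
      Ideal.span (Set.range fun i : Fin n => MvPolynomial.X i ^ 3 - MvPolynomial.X i) := by
  obtain ⟨G, hG⟩ := key_dvd P
  let ψ : Polynomial (Polynomial ℚ) →ₐ[ℚ] MvPolynomial (Fin n) ℚ :=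
    Polynomial.eval₂AlgHom (Polynomial.aeval T) (MvPolynomial.X j) fun _ => Commute.all _ _
  have hψC : ∀ p : Polynomial ℚ, ψ (C p) = Polynomial.aeval T p := fun p => by
    simp [ψ]
  have hψX : ψ X = MvPolynomial.X j := by
    simp [ψ]
  have := congrArg ψ hG
  simp only [map_sub, map_add, map_mul, map_pow, hψC, hψX] at this
  have hψa : ψ (Polynomial.aeval (C Polynomial.X + X : Polynomial (Polynomial ℚ)) P)
      = Polynomial.aeval (T + MvPolynomial.X j) P := by
    rw [← Polynomial.aeval_algHom_apply]
    congr 1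
    simp only [map_add, hψC, hψX]
    simp
  rw [hψa] at this
  rw [this]
  exact Ideal.mul_mem_right _ _ (Ideal.subset_span ⟨j, rfl⟩)

private lemma parity (s : ℕ) (Q : MvPolynomial (Fin (s + 1)) ℤ) :
    (∃ Q' : MvPolynomial (Fin s) ℤ,
        MvPolynomial.aeval (Fin.lastCases 1 MvPolynomial.X) Q
          - MvPolynomial.aeval (Fin.lastCases (-1) MvPolynomial.X) Q = 2 * Q') ∧
    (∃ Q' : MvPolynomial (Fin s) ℤ,
        MvPolynomial.aeval (Fin.lastCases 1 MvPolynomial.X) Q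
          + MvPolynomial.aeval (Fin.lastCases (-1) MvPolynomial.X) Q = 2 * Q') := by
  induction Q using MvPolynomial.induction_on with
  | C a =>
      refine ⟨⟨0, by simp⟩, ⟨MvPolynomial.C a, ?_⟩⟩
      simp only [MvPolynomial.aeval_C]
      rw [show (algebraMap ℤ (MvPolynomial (Fin s) ℤ)) a = MvPolynomial.C a from rfl]
      ring
  | add p q hp hq =>
      obtain ⟨⟨a, ha⟩, ⟨b, hb⟩⟩ := hp
      obtain ⟨⟨c, hc⟩, ⟨d, hd⟩⟩ := hq
      refine ⟨⟨a + c, ?_⟩, ⟨b + d, ?_⟩⟩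
      · simp only [map_add]; linear_combination ha + hc
      · simp only [map_add]; linear_combination hb + hd
  | mul_X p i hp =>
      obtain ⟨⟨a, ha⟩, ⟨b, hb⟩⟩ := hp
      induction i using Fin.lastCases with
      | last =>
          refine ⟨⟨b, ?_⟩, ⟨a, ?_⟩⟩ <;>
            simp only [map_mul, MvPolynomial.aeval_X, Fin.lastCases_last, mul_one,
              mul_neg_one, mul_neg] <;> ring_nf <;>
            [linear_combination hb; linear_combination ha]
      | cast j =>
          refine ⟨⟨a * MvPolynomial.X j, ?_⟩, ⟨b * MvPolynomial.X j, ?_⟩⟩ <;>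
            simp only [map_mul, MvPolynomial.aeval_X, Fin.lastCases_castSucc] <;>
            [linear_combination MvPolynomial.X (R := ℤ) j * ha;
             linear_combination MvPolynomial.X (R := ℤ) j * hb]

private lemma aeval_map_cast {n m : ℕ} (g : Fin n → MvPolynomial (Fin m) ℤ)
    (Q : MvPolynomial (Fin n) ℤ) :
    MvPolynomial.aeval (fun i => MvPolynomial.map (Int.castRingHom ℚ) (g i))
        (MvPolynomial.map (Int.castRingHom ℚ) Q)
      = MvPolynomial.map (Int.castRingHom ℚ) (MvPolynomial.aeval g Q) := by
  rw [MvPolynomial.aeval_def, MvPolynomial.eval₂_map, MvPolynomial.aeval_def,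
    MvPolynomial.eval₂_comp_left (MvPolynomial.map (Int.castRingHom ℚ))]
  congr 1
  exact RingHom.ext_int _ _

set_option maxHeartbeats 2000000 in
theorem preservesSumsOfSigns_iff_delta2 (P : Polynomial ℚ) :
    PreservesSumsOfSigns P ↔
      ((∀ m : ℤ, ∃ k : ℤ, P.eval (m : ℚ) = (k : ℚ)) ∧
        PreservesSumsOfSigns (deltaOp P) ∧
        PreservesSumsOfSigns ((1 / 2 : ℚ) • delta2Op P)) := by
  constructor
  · intro hP
    refine ⟨?_, ?_, ?_⟩
    · -- integer valued
      intro m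
      obtain ⟨Q, hQ⟩ := hP m.natAbs
      set e : ℤ := if 0 ≤ m then 1 else -1 with he
      refine ⟨MvPolynomial.eval (fun _ => e) Q, ?_⟩
      let ev : MvPolynomial (Fin m.natAbs) ℚ →ₐ[ℚ] ℚ :=
        MvPolynomial.aeval (fun _ => (e : ℚ))
      have he2 : ((e : ℚ)) ^ 3 - (e : ℚ) = 0 := by
        by_cases hm : 0 ≤ m <;> simp [he, hm] <;> norm_num
      have h0 : ev (Polynomial.aeval (∑ i : Fin m.natAbs, MvPolynomial.X i) P
          - MvPolynomial.map (Int.castRingHom ℚ) Q) = 0 := by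
        have hmem : ev (Polynomial.aeval (∑ i : Fin m.natAbs, MvPolynomial.X i) P
            - MvPolynomial.map (Int.castRingHom ℚ) Q) ∈ Ideal.span (∅ : Set ℚ) := by
          refine span_push ev.toRingHom _ _ ?_ hQ
          rintro a ⟨i, rfl⟩
          have hvi : ev (MvPolynomial.X i ^ 3 - MvPolynomial.X i) = 0 := by
            simp only [map_sub, map_pow, MvPolynomial.aeval_X, ev]
            exact he2
          show ev (MvPolynomial.X i ^ 3 - MvPolynomial.X i) ∈ Ideal.span (∅ : Set ℚ)
          rw [hvi, Ideal.span_empty]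
          exact Ideal.zero_mem _
        rw [Ideal.span_empty] at hmem
        exact Ideal.mem_bot.mp hmem
      rw [map_sub] at h0
      have hsum : ev (∑ i : Fin m.natAbs, MvPolynomial.X i) = (m : ℚ) := by
        rw [map_sum]
        simp only [MvPolynomial.aeval_X, ev]
        rw [Finset.sum_const, Finset.card_univ, Fintype.card_fin, nsmul_eq_mul]
        have hz : ((m.natAbs : ℤ) * e) = m := by
          simp only [he]; split_ifs with hm <;> omega
        calc ((m.natAbs : ℚ)) * ((e : ℤ) : ℚ) = (((m.natAbs : ℤ) * e : ℤ) : ℚ) := by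
              rw [Int.cast_mul, Int.cast_natCast]
          _ = (m : ℚ) := by rw [hz]
      have hA : ev (Polynomial.aeval (∑ i : Fin m.natAbs, MvPolynomial.X i) P)
          = P.eval (m : ℚ) := by
        rw [← Polynomial.aeval_algHom_apply, hsum, ← Polynomial.coe_aeval_eq_eval]
      have hB : ev (MvPolynomial.map (Int.castRingHom ℚ) Q)
          = ((MvPolynomial.eval (fun _ => e) Q : ℤ) : ℚ) := by
        have h1 : ev (MvPolynomial.map (Int.castRingHom ℚ) Q)
            = MvPolynomial.eval₂ ((algebraMap ℚ ℚ).comp (Int.castRingHom ℚ))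
              (fun _ => (e : ℚ)) Q := by
          rw [show ev (MvPolynomial.map (Int.castRingHom ℚ) Q)
              = MvPolynomial.aeval (fun _ : Fin m.natAbs => (e : ℚ))
                (MvPolynomial.map (Int.castRingHom ℚ) Q) from rfl,
            MvPolynomial.aeval_def, MvPolynomial.eval₂_map]
        have h2 : ((MvPolynomial.eval (fun _ => e) Q : ℤ) : ℚ)
            = MvPolynomial.eval₂ ((Int.castRingHom ℚ).comp (RingHom.id ℤ))
              ((Int.castRingHom ℚ) ∘ (fun _ => e)) Q :=
          MvPolynomial.eval₂_comp_left (Int.castRingHom ℚ) (RingHom.id ℤ) (fun _ => e) Q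
        rw [h1, h2]
        have h3 : ((algebraMap ℚ ℚ).comp (Int.castRingHom ℚ))
            = ((Int.castRingHom ℚ).comp (RingHom.id ℤ)) := RingHom.ext_int _ _
        rw [h3]
        rfl
      rw [hA, hB] at h0
      linarith [h0]
    · -- deltaOp
      intro s
      obtain ⟨Q1, hQ1⟩ := hP (s + 1)
      obtain ⟨Q0, hQ0⟩ := hP s
      set gp : Fin (s + 1) → MvPolynomial (Fin s) ℤ :=
        Fin.lastCases 1 MvPolynomial.X with hgp
      refine ⟨MvPolynomial.aeval gp Q1 - Q0, ?_⟩
      set σ : MvPolynomial (Fin (s + 1)) ℚ →ₐ[ℚ] MvPolynomial (Fin s) ℚ :=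
        MvPolynomial.aeval (fun i => MvPolynomial.map (Int.castRingHom ℚ) (gp i)) with hσ
      have hmem : ∀ p, p ∈ Ideal.span (Set.range fun i : Fin (s + 1) =>
            MvPolynomial.X i ^ 3 - MvPolynomial.X i) →
          σ p ∈ Ideal.span (Set.range fun i : Fin s =>
            MvPolynomial.X i ^ 3 - MvPolynomial.X i) := by
        intro p hp
        refine span_push σ.toRingHom _ _ ?_ hp
        rintro a ⟨i, rfl⟩
        rw [show σ.toRingHom (MvPolynomial.X i ^ 3 - MvPolynomial.X i)
            = σ (MvPolynomial.X i ^ 3 - MvPolynomial.X i) from rfl]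
        induction i using Fin.lastCases with
        | last =>
            have : σ (MvPolynomial.X (Fin.last s) ^ 3 - MvPolynomial.X (Fin.last s)) = 0 := by
              simp [hσ, hgp]
            rw [this]; exact Ideal.zero_mem _
        | cast j =>
            have : σ (MvPolynomial.X (Fin.castSucc j) ^ 3 - MvPolynomial.X (Fin.castSucc j))
                = MvPolynomial.X j ^ 3 - MvPolynomial.X j := by
              simp [hσ, hgp]
            rw [this]
            exact Ideal.subset_span ⟨j, rfl⟩
      have hA : σ (Polynomial.aeval (∑ i : Fin (s + 1), MvPolynomial.X i) P)
          = Polynomial.aeval ((∑ i : Fin s, MvPolynomial.X i) + 1) P := by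
        rw [← Polynomial.aeval_algHom_apply]
        congr 1
        rw [map_sum, Fin.sum_univ_castSucc]
        simp [hσ, hgp]
      have hB : σ (MvPolynomial.map (Int.castRingHom ℚ) Q1)
          = MvPolynomial.map (Int.castRingHom ℚ) (MvPolynomial.aeval gp Q1) :=
        aeval_map_cast gp Q1
      have e : Polynomial.aeval (∑ i : Fin s, MvPolynomial.X i) (deltaOp P)
            - MvPolynomial.map (Int.castRingHom ℚ) (MvPolynomial.aeval gp Q1 - Q0)
          = (Polynomial.aeval ((∑ i : Fin s, MvPolynomial.X i) + 1) P
              - MvPolynomial.map (Int.castRingHom ℚ) (MvPolynomial.aeval gp Q1))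
            - (Polynomial.aeval (∑ i : Fin s, MvPolynomial.X i) P
              - MvPolynomial.map (Int.castRingHom ℚ) Q0) := by
        rw [show deltaOp P = P.comp (Polynomial.X + 1) - P from rfl, map_sub,
          Polynomial.aeval_comp]
        simp only [map_sub, map_add, Polynomial.aeval_X, map_one]
        ring
      rw [e]
      refine sub_mem ?_ hQ0
      rw [← hA, ← hB, ← map_sub]
      exact hmem _ hQ1
    · -- half delta2
      intro s
      obtain ⟨Q1, hQ1⟩ := hP (s + 1)
      obtain ⟨⟨Q', hQ'⟩, -⟩ := parity s Q1
      refine ⟨Q', ?_⟩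
      set gp : Fin (s + 1) → MvPolynomial (Fin s) ℤ :=
        Fin.lastCases 1 MvPolynomial.X with hgp
      set gm : Fin (s + 1) → MvPolynomial (Fin s) ℤ :=
        Fin.lastCases (-1) MvPolynomial.X with hgm
      set σp : MvPolynomial (Fin (s + 1)) ℚ →ₐ[ℚ] MvPolynomial (Fin s) ℚ :=
        MvPolynomial.aeval (fun i => MvPolynomial.map (Int.castRingHom ℚ) (gp i)) with hσp
      set σm : MvPolynomial (Fin (s + 1)) ℚ →ₐ[ℚ] MvPolynomial (Fin s) ℚ :=
        MvPolynomial.aeval (fun i => MvPolynomial.map (Int.castRingHom ℚ) (gm i)) with hσm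
      have hmem : ∀ (σ : MvPolynomial (Fin (s + 1)) ℚ →ₐ[ℚ] MvPolynomial (Fin s) ℚ),
          (∀ i : Fin (s + 1), σ (MvPolynomial.X i ^ 3 - MvPolynomial.X i) ∈
            Ideal.span (Set.range fun i : Fin s =>
              MvPolynomial.X i ^ 3 - MvPolynomial.X i)) →
          ∀ p, p ∈ Ideal.span (Set.range fun i : Fin (s + 1) =>
            MvPolynomial.X i ^ 3 - MvPolynomial.X i) →
          σ p ∈ Ideal.span (Set.range fun i : Fin s =>
            MvPolynomial.X i ^ 3 - MvPolynomial.X i) := by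
        intro σ hσ p hp
        refine span_push σ.toRingHom _ _ ?_ hp
        rintro a ⟨i, rfl⟩
        exact hσ i
      have hgensp : ∀ i : Fin (s + 1), σp (MvPolynomial.X i ^ 3 - MvPolynomial.X i) ∈
          Ideal.span (Set.range fun i : Fin s =>
            MvPolynomial.X i ^ 3 - MvPolynomial.X i) := by
        intro i
        induction i using Fin.lastCases with
        | last =>
            have : σp (MvPolynomial.X (Fin.last s) ^ 3 - MvPolynomial.X (Fin.last s)) = 0 := by
              simp [hσp, hgp]
            rw [this]; exact Ideal.zero_mem _
        | cast j =>
            have : σp (MvPolynomial.X (Fin.castSucc j) ^ 3 - MvPolynomial.X (Fin.castSucc j))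
                = MvPolynomial.X j ^ 3 - MvPolynomial.X j := by
              simp [hσp, hgp]
            rw [this]; exact Ideal.subset_span ⟨j, rfl⟩
      have hgensm : ∀ i : Fin (s + 1), σm (MvPolynomial.X i ^ 3 - MvPolynomial.X i) ∈
          Ideal.span (Set.range fun i : Fin s =>
            MvPolynomial.X i ^ 3 - MvPolynomial.X i) := by
        intro i
        induction i using Fin.lastCases with
        | last =>
            have : σm (MvPolynomial.X (Fin.last s) ^ 3 - MvPolynomial.X (Fin.last s)) = 0 := by
              simp [hσm, hgm]; ring
            rw [this]; exact Ideal.zero_mem _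
        | cast j =>
            have : σm (MvPolynomial.X (Fin.castSucc j) ^ 3 - MvPolynomial.X (Fin.castSucc j))
                = MvPolynomial.X j ^ 3 - MvPolynomial.X j := by
              simp [hσm, hgm]
            rw [this]; exact Ideal.subset_span ⟨j, rfl⟩
      have hAp : σp (Polynomial.aeval (∑ i : Fin (s + 1), MvPolynomial.X i) P)
          = Polynomial.aeval ((∑ i : Fin s, MvPolynomial.X i) + 1) P := by
        rw [← Polynomial.aeval_algHom_apply]
        congr 1
        rw [map_sum, Fin.sum_univ_castSucc]
        simp [hσp, hgp]
      have hAm : σm (Polynomial.aeval (∑ i : Fin (s + 1), MvPolynomial.X i) P)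
          = Polynomial.aeval ((∑ i : Fin s, MvPolynomial.X i) - 1) P := by
        rw [← Polynomial.aeval_algHom_apply]
        congr 1
        rw [map_sum, Fin.sum_univ_castSucc]
        simp [hσm, hgm]
        ring
      have hBp : σp (MvPolynomial.map (Int.castRingHom ℚ) Q1)
          = MvPolynomial.map (Int.castRingHom ℚ) (MvPolynomial.aeval gp Q1) :=
        aeval_map_cast gp Q1
      have hBm : σm (MvPolynomial.map (Int.castRingHom ℚ) Q1)
          = MvPolynomial.map (Int.castRingHom ℚ) (MvPolynomial.aeval gm Q1) :=
        aeval_map_cast gm Q1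
      have hhalfQ : (MvPolynomial.C (1/2 : ℚ) : MvPolynomial (Fin s) ℚ) * 2 = 1 := by
        rw [show (2 : MvPolynomial (Fin s) ℚ) = MvPolynomial.C 2 from (map_ofNat _ 2).symm,
          ← map_mul]
        norm_num
      have e5 : MvPolynomial.map (Int.castRingHom ℚ) (MvPolynomial.aeval gp Q1)
            - MvPolynomial.map (Int.castRingHom ℚ) (MvPolynomial.aeval gm Q1)
          = 2 * MvPolynomial.map (Int.castRingHom ℚ) Q' := by
        rw [← map_sub, hQ', map_mul]
        norm_num
      have eB : Polynomial.aeval (∑ i : Fin s, MvPolynomial.X i) ((1 / 2 : ℚ) • delta2Op P)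
          = MvPolynomial.C (1/2 : ℚ) *
            (Polynomial.aeval ((∑ i : Fin s, MvPolynomial.X i) + 1) P
              - Polynomial.aeval ((∑ i : Fin s, MvPolynomial.X i) - 1) P) := by
        rw [map_smul, MvPolynomial.smul_eq_C_mul]
        congr 1
        rw [show delta2Op P = P.comp (Polynomial.X + 1) - P.comp (Polynomial.X - 1) from rfl,
          map_sub, Polynomial.aeval_comp, Polynomial.aeval_comp]
        simp only [map_add, map_sub, Polynomial.aeval_X, map_one]
      have hp := hmem σp hgensp _ hQ1
      have hm := hmem σm hgensm _ hQ1
      rw [map_sub, hAp, hBp] at hp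
      rw [map_sub, hAm, hBm] at hm
      have etot : Polynomial.aeval (∑ i : Fin s, MvPolynomial.X i) ((1 / 2 : ℚ) • delta2Op P)
            - MvPolynomial.map (Int.castRingHom ℚ) Q'
          = MvPolynomial.C (1/2 : ℚ) *
            ((Polynomial.aeval ((∑ i : Fin s, MvPolynomial.X i) + 1) P
                - MvPolynomial.map (Int.castRingHom ℚ) (MvPolynomial.aeval gp Q1))
              - (Polynomial.aeval ((∑ i : Fin s, MvPolynomial.X i) - 1) P
                - MvPolynomial.map (Int.castRingHom ℚ) (MvPolynomial.aeval gm Q1))) := by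
        rw [eB]
        linear_combination (MvPolynomial.C (1/2 : ℚ) : MvPolynomial (Fin s) ℚ) * e5
          + (MvPolynomial.map (Int.castRingHom ℚ) Q') * hhalfQ
      rw [etot]
      exact Ideal.mul_mem_left _ _ (sub_mem hp hm)
  · rintro ⟨hint, hΔ, hB⟩
    intro s
    induction s with
    | zero =>
        obtain ⟨k, hk⟩ := hint 0
        refine ⟨MvPolynomial.C k, ?_⟩
        have h1 : (∑ i : Fin 0, MvPolynomial.X (R := ℚ) i) = 0 := by simp
        rw [h1]
        have h2 : Polynomial.aeval (0 : MvPolynomial (Fin 0) ℚ) P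
            = MvPolynomial.C (P.eval 0) := by
          rw [Polynomial.aeval_def, Polynomial.eval₂_at_zero]
          rw [Polynomial.coeff_zero_eq_eval_zero]
          rfl
        rw [h2]
        have h3 : MvPolynomial.map (Int.castRingHom ℚ) (MvPolynomial.C k : MvPolynomial (Fin 0) ℤ)
            = MvPolynomial.C ((k : ℚ)) := by simp
        rw [h3]
        have h4 : P.eval (0 : ℚ) = (k : ℚ) := by
          simpa using hk
        rw [h4, sub_self]
        exact Ideal.zero_mem _
    | succ s ih =>
        obtain ⟨Q0, hQ0⟩ := ih
        obtain ⟨QΔ, hQΔ⟩ := hΔ s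
        obtain ⟨QB, hQB⟩ := hB s
        set r : MvPolynomial (Fin s) ℚ →ₐ[ℚ] MvPolynomial (Fin (s + 1)) ℚ :=
          MvPolynomial.rename Fin.castSucc with hr
        have hrmem : ∀ p, p ∈ Ideal.span (Set.range fun i : Fin s =>
              MvPolynomial.X i ^ 3 - MvPolynomial.X i) →
            r p ∈ Ideal.span (Set.range fun i : Fin (s + 1) =>
              MvPolynomial.X i ^ 3 - MvPolynomial.X i) := by
          intro p hp
          refine span_push r.toRingHom _ _ ?_ hp
          rintro a ⟨i, rfl⟩
          have : r (MvPolynomial.X i ^ 3 - MvPolynomial.X i)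
              = MvPolynomial.X (Fin.castSucc i) ^ 3 - MvPolynomial.X (Fin.castSucc i) := by
            simp [hr]
          rw [show r.toRingHom _ = r (MvPolynomial.X i ^ 3 - MvPolynomial.X i) from rfl, this]
          exact Ideal.subset_span ⟨Fin.castSucc i, rfl⟩
        set S' : MvPolynomial (Fin (s + 1)) ℚ := ∑ i : Fin s, MvPolynomial.X (Fin.castSucc i)
          with hS'
        have hrsum : r (∑ i : Fin s, MvPolynomial.X i) = S' := by
          rw [map_sum]; simp [hr, hS']
        have haeval : ∀ (W : Polynomial ℚ), r (Polynomial.aeval (∑ i : Fin s, MvPolynomial.X i) W)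
            = Polynomial.aeval S' W := fun W => by
          rw [← Polynomial.aeval_algHom_apply, hrsum]
        have hrmap : ∀ (Z : MvPolynomial (Fin s) ℤ),
            r (MvPolynomial.map (Int.castRingHom ℚ) Z)
              = MvPolynomial.map (Int.castRingHom ℚ) (MvPolynomial.rename Fin.castSucc Z) :=
          fun Z => (MvPolynomial.map_rename _ _ _).symm
        have m0 : Polynomial.aeval S' P
            - MvPolynomial.map (Int.castRingHom ℚ) (MvPolynomial.rename Fin.castSucc Q0)
            ∈ Ideal.span (Set.range fun i : Fin (s + 1) =>
              MvPolynomial.X i ^ 3 - MvPolynomial.X i) := by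
          have := hrmem _ hQ0
          rwa [map_sub, haeval, hrmap] at this
        have mΔ : Polynomial.aeval S' (deltaOp P)
            - MvPolynomial.map (Int.castRingHom ℚ) (MvPolynomial.rename Fin.castSucc QΔ)
            ∈ Ideal.span (Set.range fun i : Fin (s + 1) =>
              MvPolynomial.X i ^ 3 - MvPolynomial.X i) := by
          have := hrmem _ hQΔ
          rwa [map_sub, haeval, hrmap] at this
        have mB : Polynomial.aeval S' (Bpoly P)
            - MvPolynomial.map (Int.castRingHom ℚ) (MvPolynomial.rename Fin.castSucc QB)
            ∈ Ideal.span (Set.range fun i : Fin (s + 1) =>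
              MvPolynomial.X i ^ 3 - MvPolynomial.X i) := by
          have := hrmem _ hQB
          rwa [map_sub, haeval, hrmap] at this
        have key := key_mem P (s + 1) S' (Fin.last s)
        refine ⟨MvPolynomial.rename Fin.castSucc Q0
            + MvPolynomial.rename Fin.castSucc QB * MvPolynomial.X (Fin.last s)
            + (MvPolynomial.rename Fin.castSucc QΔ - MvPolynomial.rename Fin.castSucc QB)
              * MvPolynomial.X (Fin.last s) ^ 2, ?_⟩
        have hsum : (∑ i : Fin (s + 1), MvPolynomial.X (R := ℚ) i) = S' + MvPolynomial.X (Fin.last s) := by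
          rw [Fin.sum_univ_castSucc]
        have heq : Polynomial.aeval (∑ i : Fin (s + 1), MvPolynomial.X i) P
              - MvPolynomial.map (Int.castRingHom ℚ) (MvPolynomial.rename Fin.castSucc Q0
                + MvPolynomial.rename Fin.castSucc QB * MvPolynomial.X (Fin.last s)
                + (MvPolynomial.rename Fin.castSucc QΔ - MvPolynomial.rename Fin.castSucc QB)
                  * MvPolynomial.X (Fin.last s) ^ 2)
            = (Polynomial.aeval (S' + MvPolynomial.X (Fin.last s)) P
                - (Polynomial.aeval S' P + Polynomial.aeval S' (Bpoly P) * MvPolynomial.X (Fin.last s)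
                  + Polynomial.aeval S' (Cpoly P) * MvPolynomial.X (Fin.last s) ^ 2))
              + (Polynomial.aeval S' P
                - MvPolynomial.map (Int.castRingHom ℚ) (MvPolynomial.rename Fin.castSucc Q0))
              + (Polynomial.aeval S' (Bpoly P)
                - MvPolynomial.map (Int.castRingHom ℚ) (MvPolynomial.rename Fin.castSucc QB))
                * MvPolynomial.X (Fin.last s)
              + ((Polynomial.aeval S' (deltaOp P)
                  - MvPolynomial.map (Int.castRingHom ℚ) (MvPolynomial.rename Fin.castSucc QΔ))
                - (Polynomial.aeval S' (Bpoly P)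
                  - MvPolynomial.map (Int.castRingHom ℚ) (MvPolynomial.rename Fin.castSucc QB)))
                * MvPolynomial.X (Fin.last s) ^ 2 := by
          have hC : Polynomial.aeval S' (Cpoly P)
              = Polynomial.aeval S' (deltaOp P) - Polynomial.aeval S' (Bpoly P) := by
            rw [show Cpoly P = deltaOp P - Bpoly P from rfl, map_sub]
          have hmc : MvPolynomial.map (Int.castRingHom ℚ) (MvPolynomial.rename Fin.castSucc Q0
                + MvPolynomial.rename Fin.castSucc QB * MvPolynomial.X (Fin.last s)
                + (MvPolynomial.rename Fin.castSucc QΔ - MvPolynomial.rename Fin.castSucc QB)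
                  * MvPolynomial.X (Fin.last s) ^ 2)
              = MvPolynomial.map (Int.castRingHom ℚ) (MvPolynomial.rename Fin.castSucc Q0)
                + MvPolynomial.map (Int.castRingHom ℚ) (MvPolynomial.rename Fin.castSucc QB)
                  * MvPolynomial.X (Fin.last s)
                + (MvPolynomial.map (Int.castRingHom ℚ) (MvPolynomial.rename Fin.castSucc QΔ)
                  - MvPolynomial.map (Int.castRingHom ℚ) (MvPolynomial.rename Fin.castSucc QB))
                  * MvPolynomial.X (Fin.last s) ^ 2 := by
            simp only [map_add, map_mul, map_sub, map_pow, MvPolynomial.map_X]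
          rw [hsum, hC, hmc]
          ring
        rw [heq]
        refine add_mem (add_mem (add_mem key m0) ?_) ?_
        · exact Ideal.mul_mem_right _ _ mB
        · exact Ideal.mul_mem_right _ _ (sub_mem mΔ mB)
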